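/- Let G be a finite additive abelian group with |G| = d ≥ 2 and let n, k ≥ 1. Let p be a comb of order n and q a comb of order k. Let S : ZMod (d^n) → G be a de Bruijn sequence for the comb p over G, and let Q : ZMod (d^(k-1)) → G be a quotient string for the comb q over G. Let B be a block pattern with |B| = n + k - 1 such that the set of columns occupied by B equals the image of p, the set of rows occupied by B equals the image of q, and the connection graph of B is a forest (acyclic) with exactly c connected components. Then in the grid T : ZMod (d^(k-1)) × ZMod (d^n) → G defined by T(i,j) = S(j) + Q(i), every filling f : B → G occurs at exactly d^(c-1) positions (i,j). -/

import Mathlib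

/-- A comb of order `m`: a strictly increasing function `Fin m → ℕ` starting at `0`. -/
def IsComb (m : ℕ) (p : Fin m → ℕ) : Prop :=
  StrictMono p ∧ ∀ h : 0 < m, p ⟨0, h⟩ = 0

/-- The connection graph of a block pattern `B`: two distinct cells are adjacent iff they
lie in the same row with no cell of `B` strictly between them in that row, or in the same
column with no cell of `B` strictly between them in that column. -/
def connectionGraph (B : Finset (ℕ × ℕ)) : SimpleGraph {x // x ∈ B} :=
  SimpleGraph.fromRel (fun a b =>
    (a.1.1 = b.1.1 ∧ ∀ x ∈ B, x.1 = a.1.1 →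
        ¬(min a.1.2 b.1.2 < x.2 ∧ x.2 < max a.1.2 b.1.2)) ∨
    (a.1.2 = b.1.2 ∧ ∀ x ∈ B, x.2 = a.1.2 →
        ¬(min a.1.1 b.1.1 < x.1 ∧ x.1 < max a.1.1 b.1.1)))

open SimpleGraph in

lemma exists_degree_le_one {V : Type*} [Fintype V] [Nonempty V] {G : SimpleGraph V}
    (hG : G.IsAcyclic) : ∃ v : V, ∀ w₁ w₂, G.Adj v w₁ → G.Adj v w₂ → w₁ = w₂ := by
  classical
  set Pred : ℕ → Prop := fun m => ∃ (u v : V) (w : G.Walk u v), w.IsPath ∧ w.length = m with hPred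
  have h0 : Pred 0 := ⟨Classical.arbitrary V, Classical.arbitrary V, Walk.nil, by simp, rfl⟩
  set N := Nat.findGreatest Pred (Fintype.card V) with hNdef
  have hN : Pred N := Nat.findGreatest_spec (Nat.zero_le _) h0
  have hmax : ∀ m, Pred m → m ≤ N := by
    intro m hm
    obtain ⟨u, v, w, hw, hl⟩ := id hm
    have := hw.length_lt
    exact Nat.le_findGreatest (by omega) hm
  obtain ⟨u, v, w, hw, hlen⟩ := hN
  refine ⟨u, fun w₁ w₂ h1 h2 => ?_⟩
  by_contra hne
  cases w with
  | nil =>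
    have hp1 : Pred 1 := ⟨w₁, u, Walk.cons h1.symm Walk.nil, by simp [h1.ne'], by simp⟩
    have := hmax 1 hp1
    simp only [Walk.length_nil] at hlen
    omega
  | cons hadj rest =>
    rename_i x
    -- y : neighbor of u different from x
    obtain ⟨y, hy, hyx⟩ : ∃ y, G.Adj u y ∧ y ≠ x := by
      by_cases h : w₁ = x
      · exact ⟨w₂, h2, fun hh => hne (h.trans hh.symm)⟩
      · exact ⟨w₁, h1, h⟩
    have hw' : rest.IsPath ∧ u ∉ rest.support := (Walk.cons_isPath_iff _ _).1 hw
    by_cases hsup : y ∈ rest.support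
    · -- build a cycle
      have hp' : (rest.takeUntil y hsup).IsPath := hw'.1.takeUntil hsup
      have hu_not : u ∉ (rest.takeUntil y hsup).support := fun h =>
        hw'.2 (Walk.support_takeUntil_subset _ hsup h)
      have hq : (Walk.cons hadj (rest.takeUntil y hsup)).IsPath :=
        (Walk.cons_isPath_iff _ _).2 ⟨hp', hu_not⟩
      have he : ¬ s(y, u) ∈ (Walk.cons hadj (rest.takeUntil y hsup)).edges := by
        simp only [Walk.edges_cons, List.mem_cons]
        rintro (h | h)
        · rw [Sym2.eq_iff] at h
          rcases h with ⟨h1', h2'⟩ | ⟨h1', h2'⟩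
          · exact G.irrefl (h1' ▸ hy)
          · exact hyx h1'
        · exact hu_not ((rest.takeUntil y hsup).snd_mem_support_of_mem_edges h)
      exact hG _ ((Walk.cons_isCycle_iff _ (hy.symm)).2 ⟨hq, he⟩)
    · -- extend path
      have hylen : Pred (N + 1) := by
        refine ⟨y, v, Walk.cons hy.symm (Walk.cons hadj rest), ?_, by simp [hlen]⟩
        rw [Walk.cons_isPath_iff]
        refine ⟨hw, ?_⟩
        simp only [Walk.support_cons, List.mem_cons]
        rintro (rfl | h)
        · exact G.irrefl hy
        · exact hsup h
      have := hmax _ hylen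
      omega



lemma row_nbr {B : Finset (ℕ × ℕ)} {v y : ℕ × ℕ} (hv : v ∈ B) (hy : y ∈ B)
    (hrow : y.1 = v.1) (hlt : y.2 < v.2 ∨ v.2 < y.2) :
    ∃ z, ∃ hz : z ∈ B, z.1 = v.1 ∧ ((y.2 < v.2 ∧ z.2 < v.2) ∨ (v.2 < y.2 ∧ v.2 < z.2)) ∧
      (connectionGraph B).Adj ⟨v, hv⟩ ⟨z, hz⟩ := by
  classical
  rcases hlt with hlt | hlt
  · set s := B.filter (fun x => x.1 = v.1 ∧ y.2 ≤ x.2 ∧ x.2 < v.2) with hs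
    have hsne : s.Nonempty := ⟨y, by simp [hs, hy, hrow, hlt]⟩
    obtain ⟨z, hzs, hzmax⟩ := s.exists_max_image (fun x => x.2) hsne
    simp only [hs, Finset.mem_filter] at hzs
    obtain ⟨hzB, hz1, hzy, hz2⟩ := hzs
    refine ⟨z, hzB, hz1, Or.inl ⟨hlt, hz2⟩, ?_⟩
    rw [connectionGraph, SimpleGraph.fromRel_adj]
    constructor
    · intro h
      have : v.2 = z.2 := congrArg (fun w => w.1.2) h
      omega
    · left; left
      refine ⟨hz1.symm, fun x hx hx1 hbet => ?_⟩
      dsimp only at hbet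
      have hxs : x ∈ s := by
        simp only [hs, Finset.mem_filter]
        exact ⟨hx, hx1, by omega, by omega⟩
      have := hzmax x hxs
      omega
  · set s := B.filter (fun x => x.1 = v.1 ∧ v.2 < x.2 ∧ x.2 ≤ y.2) with hs
    have hsne : s.Nonempty := ⟨y, by simp [hs, hy, hrow, hlt]⟩
    obtain ⟨z, hzs, hzmin⟩ := s.exists_min_image (fun x => x.2) hsne
    simp only [hs, Finset.mem_filter] at hzs
    obtain ⟨hzB, hz1, hz2, hzy⟩ := hzs
    refine ⟨z, hzB, hz1, Or.inr ⟨hlt, hz2⟩, ?_⟩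
    rw [connectionGraph, SimpleGraph.fromRel_adj]
    constructor
    · intro h
      have : v.2 = z.2 := congrArg (fun w => w.1.2) h
      omega
    · left; left
      refine ⟨hz1.symm, fun x hx hx1 hbet => ?_⟩
      dsimp only at hbet
      have hxs : x ∈ s := by
        simp only [hs, Finset.mem_filter]
        exact ⟨hx, hx1, by omega, by omega⟩
      have := hzmin x hxs
      omega

lemma col_nbr {B : Finset (ℕ × ℕ)} {v y : ℕ × ℕ} (hv : v ∈ B) (hy : y ∈ B)
    (hcol : y.2 = v.2) (hlt : y.1 < v.1 ∨ v.1 < y.1) :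
    ∃ z, ∃ hz : z ∈ B, z.2 = v.2 ∧ ((y.1 < v.1 ∧ z.1 < v.1) ∨ (v.1 < y.1 ∧ v.1 < z.1)) ∧
      (connectionGraph B).Adj ⟨v, hv⟩ ⟨z, hz⟩ := by
  classical
  rcases hlt with hlt | hlt
  · set s := B.filter (fun x => x.2 = v.2 ∧ y.1 ≤ x.1 ∧ x.1 < v.1) with hs
    have hsne : s.Nonempty := ⟨y, by simp [hs, hy, hcol, hlt]⟩
    obtain ⟨z, hzs, hzmax⟩ := s.exists_max_image (fun x => x.1) hsne
    simp only [hs, Finset.mem_filter] at hzs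
    obtain ⟨hzB, hz1, hzy, hz2⟩ := hzs
    refine ⟨z, hzB, hz1, Or.inl ⟨hlt, hz2⟩, ?_⟩
    rw [connectionGraph, SimpleGraph.fromRel_adj]
    constructor
    · intro h
      have : v.1 = z.1 := congrArg (fun w => w.1.1) h
      omega
    · left; right
      refine ⟨hz1.symm, fun x hx hx1 hbet => ?_⟩
      dsimp only at hbet
      have hxs : x ∈ s := by
        simp only [hs, Finset.mem_filter]
        exact ⟨hx, hx1, by omega, by omega⟩
      have := hzmax x hxs
      omega
  · set s := B.filter (fun x => x.2 = v.2 ∧ v.1 < x.1 ∧ x.1 ≤ y.1) with hs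
    have hsne : s.Nonempty := ⟨y, by simp [hs, hy, hcol, hlt]⟩
    obtain ⟨z, hzs, hzmin⟩ := s.exists_min_image (fun x => x.1) hsne
    simp only [hs, Finset.mem_filter] at hzs
    obtain ⟨hzB, hz1, hz2, hzy⟩ := hzs
    refine ⟨z, hzB, hz1, Or.inr ⟨hlt, hz2⟩, ?_⟩
    rw [connectionGraph, SimpleGraph.fromRel_adj]
    constructor
    · intro h
      have : v.1 = z.1 := congrArg (fun w => w.1.1) h
      omega
    · left; right
      refine ⟨hz1.symm, fun x hx hx1 hbet => ?_⟩
      dsimp only at hbet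
      have hxs : x ∈ s := by
        simp only [hs, Finset.mem_filter]
        exact ⟨hx, hx1, by omega, by omega⟩
      have := hzmin x hxs
      omega

lemma reach_row {B : Finset (ℕ × ℕ)} :
    ∀ (m : ℕ) (v y : ℕ × ℕ) (hv : v ∈ B) (hy : y ∈ B), y.1 = v.1 →
      (max v.2 y.2 - min v.2 y.2) ≤ m → (connectionGraph B).Reachable ⟨v, hv⟩ ⟨y, hy⟩ := by
  intro m
  induction m with
  | zero =>
    intro v y hv hy hrow hle
    have h2 : v.2 = y.2 := by omega
    have : v = y := Prod.ext hrow.symm h2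
    subst this
    rfl
  | succ m ih =>
    intro v y hv hy hrow hle
    by_cases hvy : v = y
    · subst hvy; rfl
    by_cases hblock : ∃ x ∈ B, x.1 = v.1 ∧ min v.2 y.2 < x.2 ∧ x.2 < max v.2 y.2
    · obtain ⟨x, hxB, hx1, hx2, hx3⟩ := hblock
      have r1 := ih v x hv hxB hx1 (by omega)
      have r2 := ih x y hxB hy (by rw [hrow, hx1]) (by omega)
      exact r1.trans r2
    · push_neg at hblock
      apply SimpleGraph.Adj.reachable
      rw [connectionGraph, SimpleGraph.fromRel_adj]
      refine ⟨fun h => hvy (congrArg Subtype.val h), Or.inl (Or.inl ⟨hrow.symm, ?_⟩)⟩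
      intro x hx hx1 hbet
      exact absurd hbet.2 (not_lt_of_ge ((hblock x hx hx1 hbet.1)))

lemma reach_col {B : Finset (ℕ × ℕ)} :
    ∀ (m : ℕ) (v y : ℕ × ℕ) (hv : v ∈ B) (hy : y ∈ B), y.2 = v.2 →
      (max v.1 y.1 - min v.1 y.1) ≤ m → (connectionGraph B).Reachable ⟨v, hv⟩ ⟨y, hy⟩ := by
  intro m
  induction m with
  | zero =>
    intro v y hv hy hcol hle
    have h1 : v.1 = y.1 := by omega
    have : v = y := Prod.ext h1 hcol.symm
    subst this
    rfl
  | succ m ih =>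
    intro v y hv hy hcol hle
    by_cases hvy : v = y
    · subst hvy; rfl
    by_cases hblock : ∃ x ∈ B, x.2 = v.2 ∧ min v.1 y.1 < x.1 ∧ x.1 < max v.1 y.1
    · obtain ⟨x, hxB, hx1, hx2, hx3⟩ := hblock
      have r1 := ih v x hv hxB hx1 (by omega)
      have r2 := ih x y hxB hy (by rw [hcol, hx1]) (by omega)
      exact r1.trans r2
    · push_neg at hblock
      apply SimpleGraph.Adj.reachable
      rw [connectionGraph, SimpleGraph.fromRel_adj]
      refine ⟨fun h => hvy (congrArg Subtype.val h), Or.inl (Or.inr ⟨hcol.symm, ?_⟩)⟩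
      intro x hx hx1 hbet
      exact absurd hbet.2 (not_lt_of_ge ((hblock x hx hx1 hbet.1)))

lemma exists_sol {G : Type*} [AddCommGroup G] (f : ℕ × ℕ → G) (B : Finset (ℕ × ℕ)) :
    (connectionGraph B).IsAcyclic → ∃ a b : ℕ → G, ∀ x ∈ B, a x.2 + b x.1 = f x := by
  classical
  induction B using Finset.strongInduction with
  | _ B ih =>
    intro hac
    rcases B.eq_empty_or_nonempty with rfl | hBne
    · exact ⟨0, 0, by simp⟩
    obtain ⟨v0, hv0⟩ := hBne
    haveI : Nonempty {x // x ∈ B} := ⟨⟨v0, hv0⟩⟩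
    obtain ⟨⟨v, hv⟩, hleaf⟩ := exists_degree_le_one hac
    have honerc : (∀ x ∈ B, x.1 = v.1 → x = v) ∨ (∀ x ∈ B, x.2 = v.2 → x = v) := by
      by_contra hcon
      push_neg at hcon
      obtain ⟨⟨y, hyB, hy1, hyne⟩, ⟨z, hzB, hz2, hzne⟩⟩ := hcon
      have hy2 : y.2 < v.2 ∨ v.2 < y.2 := by
        rcases Nat.lt_trichotomy y.2 v.2 with h|h|h
        · exact Or.inl h
        · exact absurd (Prod.ext hy1 h) hyne
        · exact Or.inr h
      have hz1 : z.1 < v.1 ∨ v.1 < z.1 := by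
        rcases Nat.lt_trichotomy z.1 v.1 with h|h|h
        · exact Or.inl h
        · exact absurd (Prod.ext h hz2) hzne
        · exact Or.inr h
      obtain ⟨z₁, hz₁B, hz₁1, _, hadj₁⟩ := row_nbr hv hyB hy1 hy2
      obtain ⟨z₂, hz₂B, hz₂2, hside₂, hadj₂⟩ := col_nbr hv hzB hz2 hz1
      have heq := hleaf _ _ hadj₁ hadj₂
      have h1 : z₁.1 = z₂.1 := congrArg (fun w => w.1.1) heq
      rcases hside₂ with h|h <;> omega
    have hnotbet_row : ∀ x₁ ∈ B, ∀ x₂ ∈ B, x₁.1 = v.1 → x₂.1 = v.1 →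
        ¬(x₁.2 < v.2 ∧ v.2 < x₂.2) := by
      rintro x₁ h₁ x₂ h₂ hr₁ hr₂ ⟨hl, hr⟩
      obtain ⟨z₁, hz₁B, hz₁1, hside₁, hadj₁⟩ := row_nbr hv h₁ hr₁ (Or.inl hl)
      obtain ⟨z₂, hz₂B, hz₂1, hside₂, hadj₂⟩ := row_nbr hv h₂ hr₂ (Or.inr hr)
      have heq := hleaf _ _ hadj₁ hadj₂
      have h2 : z₁.2 = z₂.2 := congrArg (fun w => w.1.2) heq
      rcases hside₁ with h|h <;> rcases hside₂ with h'|h' <;> omega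
    have hnotbet_col : ∀ x₁ ∈ B, ∀ x₂ ∈ B, x₁.2 = v.2 → x₂.2 = v.2 →
        ¬(x₁.1 < v.1 ∧ v.1 < x₂.1) := by
      rintro x₁ h₁ x₂ h₂ hr₁ hr₂ ⟨hl, hr⟩
      obtain ⟨z₁, hz₁B, hz₁1, hside₁, hadj₁⟩ := col_nbr hv h₁ hr₁ (Or.inl hl)
      obtain ⟨z₂, hz₂B, hz₂1, hside₂, hadj₂⟩ := col_nbr hv h₂ hr₂ (Or.inr hr)
      have heq := hleaf _ _ hadj₁ hadj₂
      have h2 : z₁.1 = z₂.1 := congrArg (fun w => w.1.1) heq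
      rcases hside₁ with h|h <;> rcases hside₂ with h'|h' <;> omega
    have hsub : ∀ {x : ℕ × ℕ}, x ∈ B.erase v → x ∈ B := fun h => Finset.mem_of_mem_erase h
    have hadj_transfer : ∀ (a b : {x // x ∈ B.erase v}),
        (connectionGraph (B.erase v)).Adj a b →
          (connectionGraph B).Adj ⟨a.1, hsub a.2⟩ ⟨b.1, hsub b.2⟩ := by
      intro a b hab
      rw [connectionGraph, SimpleGraph.fromRel_adj] at hab ⊢
      obtain ⟨hne, hrel⟩ := hab
      refine ⟨fun h => hne (Subtype.ext (Subtype.mk_eq_mk.mp h)), ?_⟩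
      have key : ∀ (u w : {x // x ∈ B.erase v}),
          ((u.1.1 = w.1.1 ∧ ∀ x ∈ B.erase v, x.1 = u.1.1 →
              ¬(min u.1.2 w.1.2 < x.2 ∧ x.2 < max u.1.2 w.1.2)) ∨
           (u.1.2 = w.1.2 ∧ ∀ x ∈ B.erase v, x.2 = u.1.2 →
              ¬(min u.1.1 w.1.1 < x.1 ∧ x.1 < max u.1.1 w.1.1))) →
          ((u.1.1 = w.1.1 ∧ ∀ x ∈ B, x.1 = u.1.1 →
              ¬(min u.1.2 w.1.2 < x.2 ∧ x.2 < max u.1.2 w.1.2)) ∨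
           (u.1.2 = w.1.2 ∧ ∀ x ∈ B, x.2 = u.1.2 →
              ¬(min u.1.1 w.1.1 < x.1 ∧ x.1 < max u.1.1 w.1.1))) := by
        rintro u w (⟨hrow, hbl⟩ | ⟨hcol, hbl⟩)
        · left
          refine ⟨hrow, fun x hx hx1 hbet => ?_⟩
          by_cases hxv : x = v
          · subst hxv
            have hcases : u.1.2 < x.2 ∧ x.2 < w.1.2 ∨ w.1.2 < x.2 ∧ x.2 < u.1.2 := by omega
            rcases hcases with ⟨h1, h2⟩ | ⟨h1, h2⟩
            · exact hnotbet_row u.1 (hsub u.2) w.1 (hsub w.2) hx1.symm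
                (by rw [← hrow]; exact hx1.symm) ⟨h1, h2⟩
            · exact hnotbet_row w.1 (hsub w.2) u.1 (hsub u.2)
                (by rw [← hrow]; exact hx1.symm) hx1.symm ⟨h1, h2⟩
          · exact hbl x (Finset.mem_erase.2 ⟨hxv, hx⟩) hx1 hbet
        · right
          refine ⟨hcol, fun x hx hx1 hbet => ?_⟩
          by_cases hxv : x = v
          · subst hxv
            have hcases : u.1.1 < x.1 ∧ x.1 < w.1.1 ∨ w.1.1 < x.1 ∧ x.1 < u.1.1 := by omega
            rcases hcases with ⟨h1, h2⟩ | ⟨h1, h2⟩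
            · exact hnotbet_col u.1 (hsub u.2) w.1 (hsub w.2) hx1.symm
                (by rw [← hcol]; exact hx1.symm) ⟨h1, h2⟩
            · exact hnotbet_col w.1 (hsub w.2) u.1 (hsub u.2)
                (by rw [← hcol]; exact hx1.symm) hx1.symm ⟨h1, h2⟩
          · exact hbl x (Finset.mem_erase.2 ⟨hxv, hx⟩) hx1 hbet
      rcases hrel with h | h
      · exact Or.inl (key a b h)
      · exact Or.inr (key b a h)
    have hac' : (connectionGraph (B.erase v)).IsAcyclic := by
      intro u c hc
      let F : (connectionGraph (B.erase v)) →g (connectionGraph B) :=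
        ⟨fun x => ⟨x.1, hsub x.2⟩, fun {a b} h => hadj_transfer a b h⟩
      have Finj : Function.Injective F := by
        intro x y h
        have h2 : (F x).1 = (F y).1 := congrArg Subtype.val h
        exact Subtype.ext h2
      exact hac (c.map F) ((SimpleGraph.Walk.map_isCycle_iff_of_injective Finj).2 hc)
    obtain ⟨a, b, hab⟩ := ih (B.erase v) (Finset.erase_ssubset hv) hac'
    rcases honerc with halone | halone
    · refine ⟨a, Function.update b v.1 (f v - a v.2), ?_⟩
      intro x hx
      by_cases hxv : x = v
      · subst hxv; rw [Function.update_self]; abel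
      · have hx1 : x.1 ≠ v.1 := fun h => hxv (halone x hx h)
        rw [Function.update_of_ne hx1]
        exact hab x (Finset.mem_erase.2 ⟨hxv, hx⟩)
    · refine ⟨Function.update a v.2 (f v - b v.1), b, ?_⟩
      intro x hx
      by_cases hxv : x = v
      · subst hxv; rw [Function.update_self]; abel
      · have hx2 : x.2 ≠ v.2 := fun h => hxv (halone x hx h)
        rw [Function.update_of_ne hx2]
        exact hab x (Finset.mem_erase.2 ⟨hxv, hx⟩)

/-- if the connection graph of the block pattern `B` is a forest with exactly
`c` connected components, then in the grid `T(i,j) = S(j) + Q(i)` every filling of `B`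
occurs at exactly `d^(c-1)` positions. -/
theorem forest_pattern_occurrence_count
    (G : Type*) [AddCommGroup G] [Fintype G] (d n k c : ℕ)
    (hcardG : Fintype.card G = d) (hd : 2 ≤ d) (hn : 1 ≤ n) (hk : 1 ≤ k)
    (p : Fin n → ℕ) (q : Fin k → ℕ) (hp : IsComb n p) (hq : IsComb k q)
    (S : ZMod (d ^ n) → G)
    (hS : Function.Bijective
      (fun i : ZMod (d ^ n) => fun t : Fin n => S (i + (p t : ZMod (d ^ n)))))
    (Q : ZMod (d ^ (k - 1)) → G)
    (hQ : ∀ w : Fin k → G, ∃! i : ZMod (d ^ (k - 1)),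
      ∃ g : G, ∀ t : Fin k, Q (i + (q t : ZMod (d ^ (k - 1)))) = w t + g)
    (B : Finset (ℕ × ℕ)) (hcard : B.card = n + k - 1)
    (hcols : B.image Prod.snd = Finset.image (fun t => p t) Finset.univ)
    (hrows : B.image Prod.fst = Finset.image (fun t => q t) Finset.univ)
    (hforest : (connectionGraph B).IsAcyclic)
    (hcomps : Nat.card (connectionGraph B).ConnectedComponent = c)
    (T : ZMod (d ^ (k - 1)) × ZMod (d ^ n) → G)
    (hT : ∀ i j, T (i, j) = S j + Q i) :
    ∀ f : ℕ × ℕ → G,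
      Nat.card {ij : ZMod (d ^ (k - 1)) × ZMod (d ^ n) //
        ∀ rc ∈ B, T (ij.1 + (rc.1 : ZMod (d ^ (k - 1))), ij.2 + (rc.2 : ZMod (d ^ n))) = f rc}
        = d ^ (c - 1) := by
  classical
  intro f
  have hd0 : 0 < d := by omega
  -- basic membership facts
  have hcol_ex : ∀ x : ℕ × ℕ, x ∈ B → ∃ t : Fin n, p t = x.2 := by
    intro x hx
    have h1 : x.2 ∈ B.image Prod.snd := Finset.mem_image_of_mem _ hx
    rw [hcols] at h1
    simpa using h1
  have hrow_ex : ∀ x : ℕ × ℕ, x ∈ B → ∃ s : Fin k, q s = x.1 := by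
    intro x hx
    have h1 : x.1 ∈ B.image Prod.fst := Finset.mem_image_of_mem _ hx
    rw [hrows] at h1
    simpa using h1
  have hcell_col : ∀ t : Fin n, ∃ x, x ∈ B ∧ x.2 = p t := by
    intro t
    have h1 : p t ∈ B.image Prod.snd := by
      rw [hcols]; exact Finset.mem_image_of_mem _ (Finset.mem_univ t)
    simpa using Finset.mem_image.1 h1
  have hcell_row : ∀ s : Fin k, ∃ x, x ∈ B ∧ x.1 = q s := by
    intro s
    have h1 : q s ∈ B.image Prod.fst := by
      rw [hrows]; exact Finset.mem_image_of_mem _ (Finset.mem_univ s)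
    simpa using Finset.mem_image.1 h1
  have hBne : B.Nonempty := by
    obtain ⟨x, hx, -⟩ := hcell_col ⟨0, hn⟩
    exact ⟨x, hx⟩
  -- index / cell choice functions
  let tIdx : {x // x ∈ B} → Fin n := fun x => (hcol_ex x.1 x.2).choose
  have htIdx : ∀ x : {x // x ∈ B}, p (tIdx x) = x.1.2 := fun x => (hcol_ex x.1 x.2).choose_spec
  let sIdx : {x // x ∈ B} → Fin k := fun x => (hrow_ex x.1 x.2).choose
  have hsIdx : ∀ x : {x // x ∈ B}, q (sIdx x) = x.1.1 := fun x => (hrow_ex x.1 x.2).choose_spec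
  let cCol : Fin n → {x // x ∈ B} := fun t => ⟨(hcell_col t).choose, (hcell_col t).choose_spec.1⟩
  have hcCol : ∀ t, (cCol t).1.2 = p t := fun t => (hcell_col t).choose_spec.2
  let cRow : Fin k → {x // x ∈ B} := fun s => ⟨(hcell_row s).choose, (hcell_row s).choose_spec.1⟩
  have hcRow : ∀ s, (cRow s).1.1 = q s := fun s => (hcell_row s).choose_spec.2
  -- base solution
  obtain ⟨a₀, b₀, hab₀⟩ := exists_sol f B hforest
  let α₀ : Fin n → G := fun t => a₀ (p t)
  let β₀ : Fin k → G := fun s => b₀ (q s)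
  -- the solution space
  let SolP : (Fin n → G) × (Fin k → G) → Prop := fun αβ =>
    ∀ x ∈ B, ∀ (t : Fin n) (s : Fin k), p t = x.2 → q s = x.1 → αβ.1 t + αβ.2 s = f x
  have hbase : SolP (α₀, β₀) := by
    intro x hx t s hpt hqs
    show a₀ (p t) + b₀ (q s) = f x
    rw [hpt, hqs]
    exact hab₀ x hx
  let OT := {ij : ZMod (d ^ (k - 1)) × ZMod (d ^ n) //
    ∀ rc ∈ B, T (ij.1 + (rc.1 : ZMod (d ^ (k - 1))), ij.2 + (rc.2 : ZMod (d ^ n))) = f rc}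
  have hcomb_prop : ∀ (ij : OT) (rc : ℕ × ℕ), rc ∈ B →
      S (ij.1.2 + (rc.2 : ZMod (d ^ n))) + Q (ij.1.1 + (rc.1 : ZMod (d ^ (k - 1)))) = f rc := by
    intro ij rc hrc
    have h1 := ij.2 rc hrc
    rwa [hT] at h1
  -- the map φ
  have hφmem : ∀ x : OT × G,
      SolP (fun t => S (x.1.1.2 + (p t : ZMod (d ^ n))) + x.2,
            fun s => Q (x.1.1.1 + (q s : ZMod (d ^ (k - 1)))) - x.2) := by
    intro x y hy t s hpt hqs
    show S (x.1.1.2 + (p t : ZMod (d ^ n))) + x.2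
        + (Q (x.1.1.1 + (q s : ZMod (d ^ (k - 1)))) - x.2) = f y
    rw [hpt, hqs]
    rw [← hcomb_prop x.1 y hy]
    abel
  let φ : OT × G → {αβ // SolP αβ} := fun x => ⟨_, hφmem x⟩
  have hφinj : Function.Injective φ := by
    rintro ⟨⟨⟨i, j⟩, hij⟩, g⟩ ⟨⟨⟨i', j'⟩, hij'⟩, g'⟩ h
    have hval := congrArg Subtype.val h
    have h1 : ∀ t : Fin n, S (j + (p t : ZMod (d ^ n))) + g
        = S (j' + (p t : ZMod (d ^ n))) + g' := fun t => congrFun (congrArg Prod.fst hval) t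
    have h2 : ∀ s : Fin k, Q (i + (q s : ZMod (d ^ (k - 1)))) - g
        = Q (i' + (q s : ZMod (d ^ (k - 1)))) - g' := fun s => congrFun (congrArg Prod.snd hval) s
    have hii' : i = i' := by
      obtain ⟨i₀, -, huniq⟩ := hQ (fun s => Q (i + (q s : ZMod (d ^ (k - 1)))) - g)
      have e1 : i = i₀ := huniq i ⟨g, fun s => by abel⟩
      have e2 : i' = i₀ := huniq i' ⟨g', fun s => sub_eq_iff_eq_add.mp (h2 s).symm⟩
      rw [e1, e2]
    subst hii'
    have hgg' : g = g' := by
      have := h2 ⟨0, hk⟩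
      exact sub_right_inj.mp this
    subst hgg'
    have hjj' : j = j' := by
      apply hS.1
      funext t
      have := h1 t
      exact add_right_cancel this
    subst hjj'
    rfl
  have hφsurj : Function.Surjective φ := by
    rintro ⟨⟨α, β⟩, hαβ⟩
    obtain ⟨i, ⟨g, hg⟩, -⟩ := hQ β
    obtain ⟨j, hj⟩ := hS.2 (fun t => α t - g)
    have hj' : ∀ t, S (j + (p t : ZMod (d ^ n))) = α t - g := fun t => congrFun hj t
    have hijO : ∀ rc ∈ B,
        T (i + (rc.1 : ZMod (d ^ (k - 1))), j + (rc.2 : ZMod (d ^ n))) = f rc := by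
      intro rc hrc
      obtain ⟨t, ht⟩ := hcol_ex rc hrc
      obtain ⟨s, hs⟩ := hrow_ex rc hrc
      rw [hT, ← ht, ← hs, hj' t, hg s, ← hαβ rc hrc t s ht hs]
      abel
    refine ⟨⟨⟨(i, j), hijO⟩, g⟩, Subtype.ext (Prod.ext ?_ ?_)⟩
    · funext t
      show S (j + (p t : ZMod (d ^ n))) + g = α t
      rw [hj' t]; abel
    · funext s
      show Q (i + (q s : ZMod (d ^ (k - 1)))) - g = β s
      rw [hg s]; abel
  -- reachability within rows and columns
  have hreach_row : ∀ x y : {z // z ∈ B}, x.1.1 = y.1.1 →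
      (connectionGraph B).Reachable x y := by
    intro x y hxy
    exact reach_row (max x.1.2 y.1.2 - min x.1.2 y.1.2) x.1 y.1 x.2 y.2 hxy.symm le_rfl
  have hreach_col : ∀ x y : {z // z ∈ B}, x.1.2 = y.1.2 →
      (connectionGraph B).Reachable x y := by
    intro x y hxy
    exact reach_col (max x.1.1 y.1.1 - min x.1.1 y.1.1) x.1 y.1 x.2 y.2 hxy.symm le_rfl
  -- value map into components
  let val : {αβ // SolP αβ} → {z // z ∈ B} → G :=
    fun αβ v => αβ.1.1 (tIdx v) - α₀ (tIdx v)
  have hadj_val : ∀ (αβ : {αβ // SolP αβ}) (u w : {z // z ∈ B}),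
      (connectionGraph B).Adj u w → val αβ u = val αβ w := by
    intro αβ u w hadj
    rw [connectionGraph, SimpleGraph.fromRel_adj] at hadj
    have hrc : u.1.1 = w.1.1 ∨ u.1.2 = w.1.2 := by
      rcases hadj.2 with (⟨h, -⟩ | ⟨h, -⟩) | (⟨h, -⟩ | ⟨h, -⟩)
      · exact Or.inl h
      · exact Or.inr h
      · exact Or.inl h.symm
      · exact Or.inr h.symm
    rcases hrc with hrow | hcol
    · -- same row: use common s index
      have hqu : q (sIdx u) = u.1.1 := hsIdx u
      have h1 := αβ.2 u.1 u.2 (tIdx u) (sIdx u) (htIdx u) hqu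
      have h2 := αβ.2 w.1 w.2 (tIdx w) (sIdx u) (htIdx w) (by rw [hqu, hrow])
      have h1' := hbase u.1 u.2 (tIdx u) (sIdx u) (htIdx u) hqu
      have h2' := hbase w.1 w.2 (tIdx w) (sIdx u) (htIdx w) (by rw [hqu, hrow])
      show αβ.1.1 (tIdx u) - α₀ (tIdx u) = αβ.1.1 (tIdx w) - α₀ (tIdx w)
      have e1 : αβ.1.1 (tIdx u) = f u.1 - αβ.1.2 (sIdx u) := by rw [← h1]; abel
      have e2 : α₀ (tIdx u) = f u.1 - β₀ (sIdx u) := by rw [← h1']; abel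
      have e3 : αβ.1.1 (tIdx w) = f w.1 - αβ.1.2 (sIdx u) := by rw [← h2]; abel
      have e4 : α₀ (tIdx w) = f w.1 - β₀ (sIdx u) := by rw [← h2']; abel
      rw [e1, e2, e3, e4]; abel
    · -- same column: same t index
      have : tIdx u = tIdx w := by
        apply hp.1.injective
        rw [htIdx u, htIdx w, hcol]
      show αβ.1.1 (tIdx u) - α₀ (tIdx u) = αβ.1.1 (tIdx w) - α₀ (tIdx w)
      rw [this]
  have hwalk : ∀ (αβ : {αβ // SolP αβ}) (u w : {z // z ∈ B})
      (pw : (connectionGraph B).Walk u w), val αβ u = val αβ w := by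
    intro αβ u w pw
    induction pw with
    | nil => rfl
    | cons h pw ih => exact (hadj_val αβ _ _ h).trans ih
  let e2 : {αβ // SolP αβ} → ((connectionGraph B).ConnectedComponent → G) := fun αβ =>
    SimpleGraph.ConnectedComponent.lift (val αβ) (fun u w pw _ => hwalk αβ u w pw)
  have hinvmem : ∀ h : (connectionGraph B).ConnectedComponent → G,
      SolP (fun t => α₀ t + h ((connectionGraph B).connectedComponentMk (cCol t)),
            fun s => β₀ s - h ((connectionGraph B).connectedComponentMk (cRow s))) := by
    intro h x hx t s hpt hqs
    have hb := hbase x hx t s hpt hqs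
    have hr1 : (connectionGraph B).Reachable (cCol t) ⟨x, hx⟩ :=
      hreach_col _ _ (by rw [hcCol t, hpt])
    have hr2 : (connectionGraph B).Reachable (cRow s) ⟨x, hx⟩ :=
      hreach_row _ _ (by rw [hcRow s, hqs])
    have hcc : (connectionGraph B).connectedComponentMk (cCol t)
        = (connectionGraph B).connectedComponentMk (cRow s) :=
      SimpleGraph.ConnectedComponent.sound (hr1.trans hr2.symm)
    show α₀ t + h ((connectionGraph B).connectedComponentMk (cCol t))
        + (β₀ s - h ((connectionGraph B).connectedComponentMk (cRow s))) = f x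
    rw [hcc, ← hb]
    abel
  let e2inv : ((connectionGraph B).ConnectedComponent → G) → {αβ // SolP αβ} :=
    fun h => ⟨_, hinvmem h⟩
  have hleft : Function.LeftInverse e2inv e2 := by
    intro αβ
    apply Subtype.ext
    apply Prod.ext
    · funext t
      show α₀ t + val αβ (cCol t) = αβ.1.1 t
      have htt : tIdx (cCol t) = t := by
        apply hp.1.injective
        rw [htIdx (cCol t), hcCol t]
      show α₀ t + (αβ.1.1 (tIdx (cCol t)) - α₀ (tIdx (cCol t))) = αβ.1.1 t
      rw [htt]; abel
    · funext s
      show β₀ s - val αβ (cRow s) = αβ.1.2 s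
      have h1 := αβ.2 (cRow s).1 (cRow s).2 (tIdx (cRow s)) s (htIdx (cRow s)) (hcRow s).symm
      have h1' := hbase (cRow s).1 (cRow s).2 (tIdx (cRow s)) s (htIdx (cRow s)) (hcRow s).symm
      show β₀ s - (αβ.1.1 (tIdx (cRow s)) - α₀ (tIdx (cRow s))) = αβ.1.2 s
      have e1 : αβ.1.1 (tIdx (cRow s)) = f (cRow s).1 - αβ.1.2 s := by rw [← h1]; abel
      have e2' : α₀ (tIdx (cRow s)) = f (cRow s).1 - β₀ s := by rw [← h1']; abel
      rw [e1, e2']; abel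
  have hright : Function.RightInverse e2inv e2 := by
    intro h
    funext cc
    induction cc using SimpleGraph.ConnectedComponent.ind with
    | _ v =>
      show val (e2inv h) v = h ((connectionGraph B).connectedComponentMk v)
      show (α₀ (tIdx v) + h ((connectionGraph B).connectedComponentMk (cCol (tIdx v))))
          - α₀ (tIdx v) = h ((connectionGraph B).connectedComponentMk v)
      have hcc : (connectionGraph B).connectedComponentMk (cCol (tIdx v))
          = (connectionGraph B).connectedComponentMk v := by
        apply SimpleGraph.ConnectedComponent.sound
        apply hreach_col
        rw [hcCol (tIdx v), htIdx v]
      rw [hcc]; abel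
  -- cardinalities
  haveI : Finite (connectionGraph B).ConnectedComponent :=
    Finite.of_surjective (connectionGraph B).connectedComponentMk Quot.mk_surjective
  have hcard1 : Nat.card (OT × G) = Nat.card {αβ // SolP αβ} :=
    Nat.card_congr (Equiv.ofBijective φ ⟨hφinj, hφsurj⟩)
  have hcard2 : Nat.card {αβ // SolP αβ}
      = Nat.card ((connectionGraph B).ConnectedComponent → G) :=
    Nat.card_congr ⟨e2, e2inv, hleft, hright⟩
  have hcard3 : Nat.card ((connectionGraph B).ConnectedComponent → G) = d ^ c := by
    rw [Nat.card_fun, Nat.card_eq_fintype_card (α := G), hcardG, hcomps]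
  have hOG : Nat.card (OT × G) = Nat.card OT * d := by
    rw [Nat.card_prod, Nat.card_eq_fintype_card (α := G), hcardG]
  have hc1 : 1 ≤ c := by
    rw [← hcomps]
    haveI : Nonempty (connectionGraph B).ConnectedComponent :=
      ⟨(connectionGraph B).connectedComponentMk ⟨hBne.choose, hBne.choose_spec⟩⟩
    exact Nat.card_pos
  have hkey : Nat.card OT * d = d ^ c := by
    rw [← hOG, hcard1, hcard2, hcard3]
  have hpow : d ^ c = d ^ (c - 1) * d := by
    conv_lhs => rw [show c = (c - 1) + 1 by omega]
    rw [pow_succ]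
  have : Nat.card OT * d = d ^ (c - 1) * d := by rw [hkey, hpow]
  exact Nat.eq_of_mul_eq_mul_right hd0 this
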